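/- Let ε_B, ε_1, n, A > 0 and P ∈ (0,1). Define η(N) = A·P^(N/n)·N/(ε_B·N + ε_1) for N > 0. At any point N₀ > 0 where η'(N₀) = 0, the second derivative satisfies η''(N₀) < 0. -/

import Mathlib

open Real

theorem stmt_1 (εB ε1 n A : ℝ) (hεB : 0 < εB) (hε1 : 0 < ε1) (hn : 0 < n) (hA : 0 < A)
    (P : ℝ) (hP : P ∈ Set.Ioo (0:ℝ) 1)
    (η : ℝ → ℝ) (hη : ∀ N, η N = A * P ^ (N / n) * N / (εB * N + ε1))
    (N₀ : ℝ) (hN₀ : 0 < N₀) (hstat : deriv η N₀ = 0) :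
    deriv (deriv η) N₀ < 0 := by
  obtain ⟨hP0, hP1⟩ := hP
  set c : ℝ := Real.log P / n with hc_def
  have hc : c < 0 := div_neg_of_neg_of_pos (Real.log_neg hP0 hP1) hn
  have hηf : η = fun x => A * Real.exp (c * x) * x / (εB * x + ε1) := by
    funext N
    rw [hη]
    congr 2
    rw [Real.rpow_def_of_pos hP0]
    rw [hc_def, div_mul_eq_mul_div, mul_div_assoc]
  set g : ℝ → ℝ := fun x =>
      A * Real.exp (c * x) * (c * x * (εB * x + ε1) + ε1) / (εB * x + ε1) ^ 2 with hg_def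
  have hderiv : ∀ x : ℝ, εB * x + ε1 ≠ 0 → HasDerivAt η (g x) x := by
    intro x hx
    rw [hηf]
    have h1 : HasDerivAt (fun y : ℝ => Real.exp (c * y)) (Real.exp (c * x) * (c * 1)) x :=
      ((hasDerivAt_id x).const_mul c).exp
    have hu : HasDerivAt (fun y : ℝ => A * Real.exp (c * y) * y)
        (A * (Real.exp (c * x) * (c * 1)) * x + A * Real.exp (c * x) * 1) x :=
      (h1.const_mul A).mul (hasDerivAt_id x)
    have hv : HasDerivAt (fun y : ℝ => εB * y + ε1) (εB * 1) x :=
      ((hasDerivAt_id x).const_mul εB).add_const ε1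
    have h := hu.div hv hx
    refine h.congr_deriv ?_
    show _ = A * Real.exp (c * x) * (c * x * (εB * x + ε1) + ε1) / (εB * x + ε1) ^ 2
    rw [div_eq_div_iff (pow_ne_zero 2 hx) (pow_ne_zero 2 hx)]
    ring
  have hD : 0 < εB * N₀ + ε1 := by positivity
  have hopen : IsOpen {x : ℝ | 0 < εB * x + ε1} :=
    isOpen_lt continuous_const (by continuity)
  have hev : ∀ᶠ x in nhds N₀, 0 < εB * x + ε1 :=
    Filter.eventually_of_mem (hopen.mem_nhds hD) fun x hx => hx
  have hgev : deriv η =ᶠ[nhds N₀] g :=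
    hev.mono fun x hx => (hderiv x hx.ne').deriv
  rw [hgev.deriv_eq]
  -- stationarity gives key relation
  have hgN : g N₀ = 0 := by
    rw [← (hderiv N₀ hD.ne').deriv, hstat]
  have hnum : A * Real.exp (c * N₀) * (c * N₀ * (εB * N₀ + ε1) + ε1) = 0 := by
    rcases div_eq_zero_iff.mp hgN with h | h
    · exact h
    · exact absurd h (by positivity)
  have K : c * N₀ * (εB * N₀ + ε1) + ε1 = 0 := by
    have hA' : A ≠ 0 := hA.ne'
    have he : Real.exp (c * N₀) ≠ 0 := Real.exp_ne_zero _
    rcases mul_eq_zero.mp hnum with h | h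
    · rcases mul_eq_zero.mp h with h' | h'
      · exact absurd h' hA'
      · exact absurd h' he
    · exact h
  -- second derivative
  have h1 : HasDerivAt (fun y : ℝ => Real.exp (c * y)) (Real.exp (c * N₀) * (c * 1)) N₀ :=
    ((hasDerivAt_id N₀).const_mul c).exp
  have hlin : HasDerivAt (fun y : ℝ => εB * y + ε1) (εB * 1) N₀ :=
    ((hasDerivAt_id N₀).const_mul εB).add_const ε1
  have hw : HasDerivAt (fun y : ℝ => c * y * (εB * y + ε1) + ε1)
      (c * 1 * (εB * N₀ + ε1) + c * N₀ * (εB * 1)) N₀ :=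
    (((hasDerivAt_id N₀).const_mul c).mul hlin).add_const ε1
  have hq : HasDerivAt (fun y : ℝ => A * Real.exp (c * y) * (c * y * (εB * y + ε1) + ε1))
      (A * (Real.exp (c * N₀) * (c * 1)) * (c * N₀ * (εB * N₀ + ε1) + ε1)
        + A * Real.exp (c * N₀) * (c * 1 * (εB * N₀ + ε1) + c * N₀ * (εB * 1))) N₀ :=
    (h1.const_mul A).mul hw
  have hv2 : HasDerivAt (fun y : ℝ => (εB * y + ε1) ^ 2)
      ((2 : ℕ) * (εB * N₀ + ε1) ^ (2 - 1) * (εB * 1)) N₀ := hlin.pow 2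
  have hv2ne : (εB * N₀ + ε1) ^ 2 ≠ 0 := by positivity
  have hg' := hq.div hv2 hv2ne
  have hgderiv : deriv g N₀ =
      ((A * (Real.exp (c * N₀) * (c * 1)) * (c * N₀ * (εB * N₀ + ε1) + ε1)
          + A * Real.exp (c * N₀) * (c * 1 * (εB * N₀ + ε1) + c * N₀ * (εB * 1)))
            * (εB * N₀ + ε1) ^ 2
        - A * Real.exp (c * N₀) * (c * N₀ * (εB * N₀ + ε1) + ε1)
            * ((2 : ℕ) * (εB * N₀ + ε1) ^ (2 - 1) * (εB * 1)))
        / ((εB * N₀ + ε1) ^ 2) ^ 2 := hg'.deriv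
  rw [hgderiv]
  have hval : ((A * (Real.exp (c * N₀) * (c * 1)) * (c * N₀ * (εB * N₀ + ε1) + ε1)
          + A * Real.exp (c * N₀) * (c * 1 * (εB * N₀ + ε1) + c * N₀ * (εB * 1)))
            * (εB * N₀ + ε1) ^ 2
        - A * Real.exp (c * N₀) * (c * N₀ * (εB * N₀ + ε1) + ε1)
            * ((2 : ℕ) * (εB * N₀ + ε1) ^ (2 - 1) * (εB * 1)))
        / ((εB * N₀ + ε1) ^ 2) ^ 2
      = A * Real.exp (c * N₀) * c * (2 * εB * N₀ + ε1) / (εB * N₀ + ε1) ^ 2 := by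
    rw [div_eq_div_iff (by positivity) (by positivity)]
    push_cast
    linear_combination (A * Real.exp (c * N₀) * c * (εB * N₀ + ε1) ^ 4
      - 2 * A * Real.exp (c * N₀) * εB * (εB * N₀ + ε1) ^ 3) * K
  rw [hval]
  apply div_neg_of_neg_of_pos _ (by positivity)
  have : 0 < A * Real.exp (c * N₀) * (2 * εB * N₀ + ε1) := by positivity
  nlinarith
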